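/- For every α with 0 < α < 1, the second derivative of the Lin surprisal I*(α) = (1/2)·log₂( 4 α^α / (α+1)^{α+1} ) at α equals 1 / ((α² + α) · ln 4), which is strictly positive; hence I* is strictly convex on (0,1). -/

import Mathlib

open Real Set Filter Topology

noncomputable def linF : ℝ → ℝ :=
  fun t : ℝ => (1 / 2) * Real.logb 2 (4 * t ^ t / (t + 1) ^ (t + 1))

noncomputable def linH : ℝ → ℝ :=
  fun t => (Real.log 4 + t * Real.log t - (t + 1) * Real.log (t + 1)) / Real.log 4

noncomputable def linG : ℝ → ℝ :=
  fun t => (Real.log t - Real.log (t + 1)) / Real.log 4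

lemma log4_pos : 0 < Real.log 4 := Real.log_pos (by norm_num)

lemma linF_eq {t : ℝ} (ht : 0 < t) : linF t = linH t := by
  have ht1 : (0:ℝ) < t + 1 := by linarith
  have h1 : (0:ℝ) < t ^ t := Real.rpow_pos_of_pos ht t
  have h2 : (0:ℝ) < (t + 1) ^ (t + 1) := Real.rpow_pos_of_pos ht1 _
  have hlog : Real.log (4 * t ^ t / (t + 1) ^ (t + 1)) =
      Real.log 4 + t * Real.log t - (t + 1) * Real.log (t + 1) := by
    rw [Real.log_div (by positivity) (ne_of_gt h2),
      Real.log_mul (by norm_num) (ne_of_gt h1),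
      Real.log_rpow ht, Real.log_rpow ht1]
  have h4 : Real.log 4 = 2 * Real.log 2 := by
    rw [show (4:ℝ) = 2 ^ 2 by norm_num, Real.log_pow]; push_cast; ring
  simp only [linF, linH, Real.logb, hlog, h4]
  have : Real.log 2 ≠ 0 := ne_of_gt (Real.log_pos (by norm_num))
  field_simp

lemma linF_eventuallyEq {x : ℝ} (hx : 0 < x) : linF =ᶠ[𝓝 x] linH := by
  filter_upwards [Ioi_mem_nhds hx] with t ht
  exact linF_eq ht

lemma linH_hasDeriv {t : ℝ} (ht : 0 < t) : HasDerivAt linH (linG t) t := by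
  have h1 : HasDerivAt (fun s : ℝ => s * Real.log s) (Real.log t + 1) t :=
    Real.hasDerivAt_mul_log (ne_of_gt ht)
  have h2 : HasDerivAt (fun s : ℝ => (s + 1) * Real.log (s + 1))
      (Real.log (t + 1) + 1) t := by
    have hb : HasDerivAt (fun s : ℝ => s + 1) 1 t := (hasDerivAt_id t).add_const 1
    have := (Real.hasDerivAt_mul_log (x := t + 1) (by positivity)).comp t hb
    simpa [Function.comp_def] using this
  have h3 := ((hasDerivAt_const t (Real.log 4)).add h1).sub h2
  have h4 := h3.div_const (Real.log 4)
  convert h4 using 1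
  · rfl
  · rfl
  · rfl
  simp only [linG]
  ring

lemma derivF_eq {t : ℝ} (ht : 0 < t) : deriv linF t = linG t := by
  rw [(linF_eventuallyEq ht).deriv_eq]
  exact (linH_hasDeriv ht).deriv

lemma linG_hasDeriv {t : ℝ} (ht : 0 < t) :
    HasDerivAt linG (1 / ((t ^ 2 + t) * Real.log 4)) t := by
  have h1 : HasDerivAt Real.log t⁻¹ t := Real.hasDerivAt_log (ne_of_gt ht)
  have h2 : HasDerivAt (fun s : ℝ => Real.log (s + 1)) (t + 1)⁻¹ t := by
    have hb : HasDerivAt (fun s : ℝ => s + 1) 1 t := (hasDerivAt_id t).add_const 1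
    have := (Real.hasDerivAt_log (x := t + 1) (by positivity)).comp t hb
    simpa [Function.comp_def] using this
  have h3 := (h1.sub h2).div_const (Real.log 4)
  have heq : (t⁻¹ - (t + 1)⁻¹) / Real.log 4 = 1 / ((t ^ 2 + t) * Real.log 4) := by
    have ht1 : (0:ℝ) < t + 1 := by linarith
    have : Real.log 4 ≠ 0 := ne_of_gt log4_pos
    field_simp
    try ring
    try simp
  rw [heq] at h3
  exact h3

lemma deriv2F_eq {t : ℝ} (ht : 0 < t) :
    deriv (deriv linF) t = 1 / ((t ^ 2 + t) * Real.log 4) := by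
  have hev : deriv linF =ᶠ[𝓝 t] linG := by
    filter_upwards [Ioi_mem_nhds ht] with s hs
    exact derivF_eq hs
  rw [hev.deriv_eq]
  exact (linG_hasDeriv ht).deriv

lemma deriv2F_pos {t : ℝ} (ht : 0 < t) : 0 < deriv (deriv linF) t := by
  rw [deriv2F_eq ht]
  have := log4_pos
  positivity

theorem linSurprisal_secondDeriv (α : ℝ) (h0 : 0 < α) (h1 : α < 1) :
    deriv (deriv
        (fun t : ℝ => (1 / 2) * Real.logb 2 (4 * t ^ t / (t + 1) ^ (t + 1)))) α =
        1 / ((α ^ 2 + α) * Real.log 4) ∧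
      0 < 1 / ((α ^ 2 + α) * Real.log 4) ∧
      StrictConvexOn ℝ (Set.Ioo 0 1)
        (fun t : ℝ => (1 / 2) * Real.logb 2 (4 * t ^ t / (t + 1) ^ (t + 1))) := by
  have hF : (fun t : ℝ => (1 / 2) * Real.logb 2 (4 * t ^ t / (t + 1) ^ (t + 1))) = linF :=
    rfl
  refine ⟨by rw [hF]; exact deriv2F_eq h0, ?_, ?_⟩
  · have := log4_pos
    positivity
  · rw [hF]
    apply strictConvexOn_of_deriv2_pos (convex_Ioo 0 1)
    · intro x hx
      have hd : DifferentiableAt ℝ linF x :=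
        ((linH_hasDeriv hx.1).congr_of_eventuallyEq (linF_eventuallyEq hx.1)).differentiableAt
      exact hd.continuousAt.continuousWithinAt
    · intro x hx
      rw [interior_Ioo] at hx
      simpa [Function.iterate_succ, Function.comp] using deriv2F_pos hx.1
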